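/- If R is a standard balanced tableau with inv(R) > 0, then there exist entries i and i+1 with i in a strictly higher row than i+1. -/
import Mathlib


/-- The Coxeter length of `w`: the number of inversion pairs. -/
def invCount {n : ℕ} (w : Equiv.Perm (Fin n)) : ℕ :=
  (Finset.univ.filter fun p : Fin n × Fin n => p.1 < p.2 ∧ w p.2 < w p.1).card

/-- The Rothe diagram of `w` (0-indexed): the cells `(i, w j)` for inversions `i < j`,
`w j < w i`, as a subset of `ℕ × ℕ` (first coordinate the row, drawn with row `0` at the
bottom so that "above" means larger first coordinate; second coordinate the column). -/
def RotheD (n : ℕ) (w : Equiv.Perm (Fin n)) : Finset (ℕ × ℕ) :=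
  (Finset.univ.filter fun p : Fin n × Fin n => p.1 < p.2 ∧ w p.2 < w p.1).image
    fun p => ((p.1 : ℕ), (w p.2 : ℕ))

/-- A standard balanced tableau on a diagram `D`: a bijective filling of the cells of `D`
by `1, …, |D|` such that for every cell, the number of larger entries to its right in its
row equals the number of smaller entries above it in its column. -/
def IsSBT (D : Finset (ℕ × ℕ)) (T : ℕ × ℕ → ℕ) : Prop :=
  Set.InjOn T ↑D ∧ D.image T = Finset.Icc 1 D.card ∧
  ∀ x ∈ D, (D.filter fun y => y.1 = x.1 ∧ x.2 < y.2 ∧ T x < T y).card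
    = (D.filter fun y => y.2 = x.2 ∧ x.1 < y.1 ∧ T y < T x).card

/-- The inversion number of a tableau on `D`: the number of pairs of entries `i < j`
with `i` in a strictly higher row and a different column than `j`. -/
def invT (D : Finset (ℕ × ℕ)) (T : ℕ × ℕ → ℕ) : ℕ :=
  ((D ×ˢ D).filter fun p => T p.1 < T p.2 ∧ p.2.1 < p.1.1 ∧ p.1.2 ≠ p.2.2).card

/-- A standard balanced tableau with positive inversion number has consecutive entries
`i` and `i+1` with `i` in a strictly higher row than `i+1`. -/
theorem exists_consecutive_descent (n : ℕ) (w : Equiv.Perm (Fin n))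
    (T : ℕ × ℕ → ℕ) (hT : IsSBT (RotheD n w) T) (hpos : 0 < invT (RotheD n w) T) :
    ∃ x ∈ RotheD n w, ∃ y ∈ RotheD n w, T y = T x + 1 ∧ y.1 < x.1 := by
  classical
  set D := RotheD n w with hD
  obtain ⟨hinj, himg, _⟩ := hT
  -- extract an inversion pair
  rw [invT, Finset.card_pos] at hpos
  obtain ⟨p, hp⟩ := hpos
  rw [Finset.mem_filter, Finset.mem_product] at hp
  obtain ⟨⟨ha, hb⟩, hTlt, hrow, -⟩ := hp
  set a := p.1
  set b := p.2
  -- cell-of-entry function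
  have hex : ∀ k, T a ≤ k → k ≤ T b → ∃ c ∈ D, T c = k := by
    intro k h1 h2
    have hTa : T a ∈ Finset.Icc 1 D.card := by
      rw [← himg]; exact Finset.mem_image_of_mem T ha
    have hTb : T b ∈ Finset.Icc 1 D.card := by
      rw [← himg]; exact Finset.mem_image_of_mem T hb
    have hk : k ∈ Finset.Icc 1 D.card := by
      rw [Finset.mem_Icc] at *
      exact ⟨le_trans hTa.1 h1, le_trans h2 hTb.2⟩
    rw [← himg, Finset.mem_image] at hk
    obtain ⟨c, hc, hck⟩ := hk
    exact ⟨c, hc, hck⟩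
  let f : ℕ → ℕ × ℕ := fun k => if h : ∃ c ∈ D, T c = k then h.choose else (0, 0)
  have hf : ∀ k, T a ≤ k → k ≤ T b → f k ∈ D ∧ T (f k) = k := by
    intro k h1 h2
    have h := hex k h1 h2
    simp only [f, dif_pos h]
    exact ⟨h.choose_spec.1, h.choose_spec.2⟩
  -- f (T a) = a, f (T b) = b
  have hfa : f (T a) = a := by
    have h := hf (T a) le_rfl hTlt.le
    exact hinj h.1 ha h.2
  have hfb : f (T b) = b := by
    have h := hf (T b) hTlt.le le_rfl
    exact hinj h.1 hb h.2
  -- find a consecutive descent of rows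
  by_contra hcon
  push_neg at hcon
  -- show rows weakly increase along entries, contradicting hrow
  have mono : ∀ d, T a + d ≤ T b → (f (T a)).1 ≤ (f (T a + d)).1 := by
    intro d
    induction d with
    | zero => intro _; rfl
    | succ d ih =>
      intro hle
      have hle' : T a + d ≤ T b := by omega
      have h1 := hf (T a + d) (by omega) hle'
      have h2 := hf (T a + d + 1) (by omega) (by omega)
      have := hcon _ h1.1 _ h2.1 (by rw [h1.2, h2.2])
      calc (f (T a)).1 ≤ (f (T a + d)).1 := ih hle'
        _ ≤ (f (T a + (d+1))).1 := by
          have : (f (T a + d + 1)).1 ≥ (f (T a + d)).1 := this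
          simpa [← add_assoc] using this
  have := mono (T b - T a) (by omega)
  rw [hfa, show T a + (T b - T a) = T b by omega, hfb] at this
  omega
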